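/- For every integer m ≥ 1, N_m = Σ_{j=1}^{m−1} (2^j − 1)·N_{m−j} + (2^m − 1) + (2^{m+1} − 1), where the sum is empty when m = 1. -/
import Mathlib


/-- `Lessdot l₁ l₂ s` means `l₁ + l₂ ⋖ s`: for every bit position `i`,
the binary digits satisfy `(l₁)ᵢ + (l₂)ᵢ ≤ (s)ᵢ`. -/
def Lessdot (l₁ l₂ s : ℕ) : Prop :=
  ∀ i : ℕ, (l₁.testBit i).toNat + (l₂.testBit i).toNat ≤ (s.testBit i).toNat

open scoped Classical in
/-- `BSet r s = B_s^{(r)} = {2^r·l₁ + l₂ : l₁ + l₂ ⋖ s}`.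
(Note `l₁ + l₂ ⋖ s` forces `l₁, l₂ ≤ s`, so the ranges capture the whole set.) -/
noncomputable def BSet (r s : ℕ) : Finset ℕ :=
  ((Finset.range (s + 1) ×ˢ Finset.range (s + 1)).filter
    (fun p => Lessdot p.1 p.2 s)).image (fun p => 2 ^ r * p.1 + p.2)

/-- `Nnum r m = N_m^{(r)} = Σ_{s=0}^{2^m−1} |B_s^{(r)}|`. -/
noncomputable def Nnum (r m : ℕ) : ℕ := ∑ s ∈ Finset.range (2 ^ m), (BSet r s).card

open Finset

/-! ### Basic facts about `Lessdot` -/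

lemma toNat_testBit_zero (n : ℕ) : (n.testBit 0).toNat = n % 2 := by
  rw [Nat.testBit_zero]
  rcases Nat.mod_two_eq_zero_or_one n with h | h <;> simp [h]

lemma lessdot_le {l₁ l₂ s : ℕ} (h : Lessdot l₁ l₂ s) : l₁ ≤ s ∧ l₂ ≤ s := by
  have key : ∀ l l' : ℕ, Lessdot l l' s → l ≤ s := by
    intro l l' hl
    have : l &&& s = l := by
      apply Nat.eq_of_testBit_eq
      intro i
      have hi := hl i
      rw [Nat.testBit_and]
      cases hb : l.testBit i <;> cases hb' : s.testBit i <;> simp_all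
    calc l = l &&& s := this.symm
      _ ≤ s := Nat.and_le_right
  refine ⟨key l₁ l₂ h, key l₂ l₁ (fun i => ?_)⟩
  have := h i; omega

lemma lessdot_iff (l₁ l₂ s : ℕ) :
    Lessdot l₁ l₂ s ↔ l₁ % 2 + l₂ % 2 ≤ s % 2 ∧ Lessdot (l₁ / 2) (l₂ / 2) (s / 2) := by
  constructor
  · intro h
    refine ⟨?_, fun i => ?_⟩
    · have := h 0
      simpa only [toNat_testBit_zero] using this
    · have := h (i + 1)
      simpa [Nat.testBit_succ] using this
  · rintro ⟨h0, h⟩ i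
    cases i with
    | zero => simpa only [toNat_testBit_zero] using h0
    | succ i => simpa [Nat.testBit_succ] using h i

lemma lessdot_zero (s : ℕ) : Lessdot 0 0 s := by
  intro i; simp [Nat.zero_testBit]

/-- build a `Lessdot` for `2*s+t` from one for `s`. -/
lemma lessdot_cons {A B s : ℕ} (hs : Lessdot A B s) {e₁ e₂ t : ℕ}
    (he : e₁ + e₂ ≤ t) (ht : t ≤ 1) (he₁ : e₁ ≤ 1) (he₂ : e₂ ≤ 1) :
    Lessdot (2 * A + e₁) (2 * B + e₂) (2 * s + t) := by
  rw [lessdot_iff]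
  have d1 : (2 * A + e₁) / 2 = A := by omega
  have d2 : (2 * B + e₂) / 2 = B := by omega
  have d3 : (2 * s + t) / 2 = s := by omega
  refine ⟨by omega, ?_⟩
  rw [d1, d2, d3]; exact hs

lemma lessdot_uncons {a b s t : ℕ} (ht : t ≤ 1) (h : Lessdot a b (2 * s + t)) :
    a % 2 + b % 2 ≤ t ∧ Lessdot (a / 2) (b / 2) s := by
  rw [lessdot_iff] at h
  have d3 : (2 * s + t) / 2 = s := by omega
  rw [d3] at h
  exact ⟨by omega, h.2⟩

/-! ### Membership descriptions -/

lemma mem_BSet {s n : ℕ} : n ∈ BSet 1 s ↔ ∃ l₁ l₂, Lessdot l₁ l₂ s ∧ n = 2 * l₁ + l₂ := by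
  classical
  simp only [BSet, Finset.mem_image, Finset.mem_filter, Finset.mem_product, Finset.mem_range]
  constructor
  · rintro ⟨⟨a, b⟩, ⟨⟨-, -⟩, h⟩, rfl⟩
    exact ⟨a, b, h, by norm_num⟩
  · rintro ⟨a, b, h, rfl⟩
    exact ⟨(a, b), ⟨⟨Nat.lt_succ_of_le (lessdot_le h).1, Nat.lt_succ_of_le (lessdot_le h).2⟩, h⟩,
      by norm_num⟩

/-- `Cset s = B_s ∪ (B_s + 1)`. -/
noncomputable def Cset (s : ℕ) : Finset ℕ := BSet 1 s ∪ (BSet 1 s).image (· + 1)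

noncomputable def Mnum (m : ℕ) : ℕ := ∑ s ∈ Finset.range (2 ^ m), (Cset s).card

lemma mem_Cset {s n : ℕ} :
    n ∈ Cset s ↔ ∃ l₁ l₂, Lessdot l₁ l₂ s ∧ (n = 2 * l₁ + l₂ ∨ n = 2 * l₁ + l₂ + 1) := by
  simp only [Cset, Finset.mem_union, Finset.mem_image, mem_BSet]
  constructor
  · rintro (⟨a, b, h, rfl⟩ | ⟨x, ⟨a, b, h, rfl⟩, rfl⟩)
    · exact ⟨a, b, h, Or.inl rfl⟩
    · exact ⟨a, b, h, Or.inr rfl⟩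
  · rintro ⟨a, b, h, rfl | rfl⟩
    · exact Or.inl ⟨a, b, h, rfl⟩
    · exact Or.inr ⟨_, ⟨a, b, h, rfl⟩, rfl⟩

/-! ### Set recurrences -/

lemma BSet_even (s : ℕ) : BSet 1 (2 * s) = (BSet 1 s).image (fun n => 2 * n) := by
  ext n
  simp only [Finset.mem_image, mem_BSet]
  constructor
  · rintro ⟨a, b, h, rfl⟩
    obtain ⟨h0, h1⟩ := lessdot_uncons (a := a) (b := b) (s := s) (t := 0) (by norm_num)
      (by simpa using h)
    exact ⟨2 * (a / 2) + b / 2, ⟨a / 2, b / 2, h1, rfl⟩, by omega⟩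
  · rintro ⟨m, ⟨a, b, h, rfl⟩, rfl⟩
    refine ⟨2 * a, 2 * b, ?_, by ring⟩
    simpa using lessdot_cons h (e₁ := 0) (e₂ := 0) (t := 0) (by norm_num) (by norm_num)
      (by norm_num) (by norm_num)

lemma BSet_odd (s : ℕ) :
    BSet 1 (2 * s + 1) =
      (Cset s).image (fun n => 2 * n) ∪ (BSet 1 s).image (fun n => 2 * n + 1) := by
  ext n
  simp only [Finset.mem_union, Finset.mem_image, mem_BSet, mem_Cset]
  constructor
  · rintro ⟨a, b, h, rfl⟩
    obtain ⟨h0, h1⟩ := lessdot_uncons (by norm_num) h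
    set A := a / 2; set B := b / 2
    rcases Nat.eq_zero_or_pos (b % 2) with hb | hb
    · -- b even: n = 2*(2A+B) + (a%2), even part
      refine Or.inl ⟨2 * A + B + a % 2, ⟨A, B, h1, ?_⟩, by omega⟩
      omega
    · -- b odd, a even: n = 2*(2A+B)+1
      exact Or.inr ⟨2 * A + B, ⟨A, B, h1, rfl⟩, by omega⟩
  · rintro (⟨m, ⟨A, B, h, hm⟩, rfl⟩ | ⟨m, ⟨A, B, h, rfl⟩, rfl⟩)
    · rcases hm with rfl | rfl
      · exact ⟨2 * A, 2 * B, lessdot_cons h (e₁ := 0) (e₂ := 0) (by norm_num) (by norm_num)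
          (by norm_num) (by norm_num), by ring⟩
      · exact ⟨2 * A + 1, 2 * B, lessdot_cons h (e₁ := 1) (e₂ := 0) (by norm_num) (by norm_num)
          (by norm_num) (by norm_num), by ring⟩
    · exact ⟨2 * A, 2 * B + 1, lessdot_cons h (e₁ := 0) (e₂ := 1) (by norm_num) (by norm_num)
        (by norm_num) (by norm_num), by ring⟩

lemma Cset_even (s : ℕ) :
    Cset (2 * s) = (BSet 1 s).image (fun n => 2 * n) ∪ (BSet 1 s).image (fun n => 2 * n + 1) := by
  ext n
  simp only [Finset.mem_union, Finset.mem_image, mem_BSet, mem_Cset]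
  constructor
  · rintro ⟨a, b, h, hn⟩
    obtain ⟨h0, h1⟩ := lessdot_uncons (a := a) (b := b) (s := s) (t := 0) (by norm_num)
      (by simpa using h)
    have hm : 2 * a + b = 2 * (2 * (a / 2) + b / 2) := by omega
    rcases hn with rfl | rfl
    · exact Or.inl ⟨2 * (a / 2) + b / 2, ⟨a / 2, b / 2, h1, rfl⟩, by omega⟩
    · exact Or.inr ⟨2 * (a / 2) + b / 2, ⟨a / 2, b / 2, h1, rfl⟩, by omega⟩
  · have hld : ∀ A B : ℕ, Lessdot A B s → Lessdot (2 * A) (2 * B) (2 * s) := by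
      intro A B h
      simpa using lessdot_cons h (e₁ := 0) (e₂ := 0) (t := 0) (by norm_num) (by norm_num)
        (by norm_num) (by norm_num)
    rintro (⟨m, ⟨A, B, h, rfl⟩, rfl⟩ | ⟨m, ⟨A, B, h, rfl⟩, rfl⟩)
    · exact ⟨2 * A, 2 * B, hld A B h, Or.inl (by ring)⟩
    · exact ⟨2 * A, 2 * B, hld A B h, Or.inr (by ring)⟩

lemma Cset_odd (s : ℕ) :
    Cset (2 * s + 1) = (Cset s).image (fun n => 2 * n) ∪ (Cset s).image (fun n => 2 * n + 1) := by
  ext n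
  simp only [Finset.mem_union, Finset.mem_image, mem_Cset]
  constructor
  · rintro ⟨a, b, h, hn⟩
    obtain ⟨h0, h1⟩ := lessdot_uncons (by norm_num) h
    set A := a / 2; set B := b / 2
    have hc : n / 2 = 2 * A + B ∨ n / 2 = 2 * A + B + 1 := by omega
    rcases Nat.eq_zero_or_pos (n % 2) with hp | hp
    · exact Or.inl ⟨n / 2, ⟨A, B, h1, hc⟩, by omega⟩
    · exact Or.inr ⟨n / 2, ⟨A, B, h1, hc⟩, by omega⟩
  · have c00 : ∀ A B : ℕ, Lessdot A B s → Lessdot (2 * A) (2 * B) (2 * s + 1) := fun A B h =>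
      lessdot_cons h (e₁ := 0) (e₂ := 0) (by norm_num) (by norm_num) (by norm_num) (by norm_num)
    have c01 : ∀ A B : ℕ, Lessdot A B s → Lessdot (2 * A) (2 * B + 1) (2 * s + 1) := fun A B h =>
      lessdot_cons h (e₁ := 0) (e₂ := 1) (by norm_num) (by norm_num) (by norm_num) (by norm_num)
    have c10 : ∀ A B : ℕ, Lessdot A B s → Lessdot (2 * A + 1) (2 * B) (2 * s + 1) := fun A B h =>
      lessdot_cons h (e₁ := 1) (e₂ := 0) (by norm_num) (by norm_num) (by norm_num) (by norm_num)
    rintro (⟨m, ⟨A, B, h, rfl | rfl⟩, rfl⟩ | ⟨m, ⟨A, B, h, rfl | rfl⟩, rfl⟩)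
    · exact ⟨2 * A, 2 * B, c00 A B h, Or.inl (by ring)⟩
    · exact ⟨2 * A, 2 * B + 1, c01 A B h, Or.inr (by ring)⟩
    · exact ⟨2 * A, 2 * B, c00 A B h, Or.inr (by ring)⟩
    · exact ⟨2 * A + 1, 2 * B, c10 A B h, Or.inr (by ring)⟩

/-! ### Cardinality recurrences -/

lemma card_even_odd_union (X Y : Finset ℕ) :
    ((X.image (fun n => 2 * n)) ∪ (Y.image (fun n => 2 * n + 1))).card = X.card + Y.card := by
  rw [Finset.card_union_of_disjoint, Finset.card_image_of_injective _ (fun a b h => by omega),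
    Finset.card_image_of_injective _ (fun a b h => by omega)]
  rw [Finset.disjoint_left]
  rintro n hn hn'
  simp only [Finset.mem_image] at hn hn'
  obtain ⟨x, -, rfl⟩ := hn
  obtain ⟨y, -, hy⟩ := hn'
  omega

lemma b_even (s : ℕ) : (BSet 1 (2 * s)).card = (BSet 1 s).card := by
  rw [BSet_even, Finset.card_image_of_injective _ (fun a b h => by omega)]

lemma b_odd (s : ℕ) : (BSet 1 (2 * s + 1)).card = (Cset s).card + (BSet 1 s).card := by
  rw [BSet_odd, card_even_odd_union]

lemma c_even (s : ℕ) : (Cset (2 * s)).card = 2 * (BSet 1 s).card := by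
  rw [Cset_even, card_even_odd_union]; ring

lemma c_odd (s : ℕ) : (Cset (2 * s + 1)).card = 2 * (Cset s).card := by
  rw [Cset_odd, card_even_odd_union]; ring

/-! ### Base values -/

lemma BSet_zero : BSet 1 0 = {0} := by
  ext n
  simp only [mem_BSet, Finset.mem_singleton]
  constructor
  · rintro ⟨a, b, h, rfl⟩
    have := lessdot_le h
    omega
  · rintro rfl
    exact ⟨0, 0, lessdot_zero 0, rfl⟩

lemma b_zero : (BSet 1 0).card = 1 := by rw [BSet_zero]; rfl

lemma c_zero : (Cset 0).card = 2 := by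
  rw [Cset, BSet_zero]
  decide

/-! ### Recurrences for the sums -/

lemma sum_range_two_mul (n : ℕ) (f : ℕ → ℕ) :
    ∑ i ∈ range (2 * n), f i = ∑ i ∈ range n, (f (2 * i) + f (2 * i + 1)) := by
  induction n with
  | zero => simp
  | succ n ih =>
    have h2 : 2 * (n + 1) = 2 * n + 1 + 1 := by ring
    rw [h2, Finset.sum_range_succ, Finset.sum_range_succ, ih, Finset.sum_range_succ]
    omega

lemma N_succ (m : ℕ) : Nnum 1 (m + 1) = 2 * Nnum 1 m + Mnum m := by
  have h2 : (2 : ℕ) ^ (m + 1) = 2 * 2 ^ m := by ring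
  rw [Nnum, h2, sum_range_two_mul]
  have he : ∀ s ∈ range (2 ^ m),
      (BSet 1 (2 * s)).card + (BSet 1 (2 * s + 1)).card
        = 2 * (BSet 1 s).card + (Cset s).card := by
    intro s _
    rw [b_even, b_odd]; ring
  rw [Finset.sum_congr rfl he, Finset.sum_add_distrib, ← Finset.mul_sum]
  rfl

lemma M_succ (m : ℕ) : Mnum (m + 1) = 2 * Nnum 1 m + 2 * Mnum m := by
  have h2 : (2 : ℕ) ^ (m + 1) = 2 * 2 ^ m := by ring
  rw [Mnum, h2, sum_range_two_mul]
  have he : ∀ s ∈ range (2 ^ m),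
      (Cset (2 * s)).card + (Cset (2 * s + 1)).card
        = 2 * (BSet 1 s).card + 2 * (Cset s).card := by
    intro s _
    rw [c_even, c_odd]
  rw [Finset.sum_congr rfl he, Finset.sum_add_distrib, ← Finset.mul_sum, ← Finset.mul_sum]
  rfl

lemma N_zero : Nnum 1 0 = 1 := by
  rw [Nnum]
  simp [b_zero]

lemma M_zero : Mnum 0 = 2 := by
  rw [Mnum]
  simp [c_zero]

lemma N_one : Nnum 1 1 = 4 := by
  rw [N_succ, N_zero, M_zero]

/-! ### The `M` formula and the key sum identity -/

lemma M_formula (k : ℕ) :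
    Mnum k = 2 ^ (k + 1) + ∑ i ∈ range k, 2 ^ (k - i) * Nnum 1 i := by
  induction k with
  | zero => simp [M_zero]
  | succ k ih =>
    rw [M_succ, ih, Finset.sum_range_succ]
    have he : ∀ i ∈ range k, 2 ^ (k + 1 - i) * Nnum 1 i = 2 * (2 ^ (k - i) * Nnum 1 i) := by
      intro i hi
      rw [Finset.mem_range] at hi
      have h1 : k + 1 - i = (k - i) + 1 := by omega
      rw [h1, pow_succ]; ring
    rw [Finset.sum_congr rfl he, ← Finset.mul_sum]
    have hp : (2 : ℕ) ^ (k + 1 + 1) = 2 * 2 ^ (k + 1) := by ring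
    have hk : k + 1 - k = 1 := by omega
    rw [hp, hk]
    omega

lemma S_formula (k : ℕ) :
    (∑ i ∈ range (k + 1), Nnum 1 (i + 1)) + 2 + 2 ^ (k + 1)
      = (∑ i ∈ range k, 2 ^ (k - i) * Nnum 1 (i + 1)) + 2 ^ (k + 3) := by
  induction k with
  | zero => simp [N_one]
  | succ k ih =>
    rw [Finset.sum_range_succ]
    -- RHS sum: split top and factor 2
    rw [show (∑ i ∈ range (k + 1), 2 ^ (k + 1 - i) * Nnum 1 (i + 1))
        = (∑ i ∈ range k, 2 ^ (k + 1 - i) * Nnum 1 (i + 1)) + 2 * Nnum 1 (k + 1) by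
      rw [Finset.sum_range_succ]
      congr 1
      rw [show k + 1 - k = 1 by omega, pow_one]]
    have he : ∀ i ∈ range k, 2 ^ (k + 1 - i) * Nnum 1 (i + 1)
        = 2 * (2 ^ (k - i) * Nnum 1 (i + 1)) := by
      intro i hi
      rw [Finset.mem_range] at hi
      rw [show k + 1 - i = (k - i) + 1 by omega, pow_succ]; ring
    rw [Finset.sum_congr rfl he, ← Finset.mul_sum]
    -- expand N (k+2)
    have hN : Nnum 1 (k + 1 + 1)
        = 2 * Nnum 1 (k + 1) + (2 ^ (k + 2) + ∑ i ∈ range (k + 1), 2 ^ (k + 1 - i) * Nnum 1 i) := by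
      rw [N_succ, M_formula]
    have hs : (∑ i ∈ range (k + 1), 2 ^ (k + 1 - i) * Nnum 1 i)
        = (∑ i ∈ range k, 2 ^ (k - i) * Nnum 1 (i + 1)) + 2 ^ (k + 1) := by
      rw [Finset.sum_range_succ']
      simp [N_zero]
    rw [hs] at hN
    rw [hN]
    -- now pure linear arithmetic in the atoms
    have p1 : (2 : ℕ) ^ (k + 1 + 1) = 2 * 2 ^ (k + 1) := by ring
    have p2 : (2 : ℕ) ^ (k + 2) = 2 * 2 ^ (k + 1) := by ring
    have p3 : (2 : ℕ) ^ (k + 3) = 4 * 2 ^ (k + 1) := by ring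
    have p4 : (2 : ℕ) ^ (k + 1 + 3) = 8 * 2 ^ (k + 1) := by ring
    omega

/-! ### Icc-to-range conversion -/

lemma sum_Icc_one (k : ℕ) (f : ℕ → ℕ) :
    ∑ j ∈ Finset.Icc 1 k, f j = ∑ j ∈ range k, f (j + 1) := by
  induction k with
  | zero => simp
  | succ k ih =>
    rw [Finset.sum_Icc_succ_top (by omega), ih, Finset.sum_range_succ]

/-- For every `m ≥ 1`,
`N_m = Σ_{j=1}^{m−1} (2^j − 1)·N_{m−j} + (2^m − 1) + (2^{m+1} − 1)`,
with the sum empty when `m = 1`. -/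
theorem stmt_6 (m : ℕ) (hm : 1 ≤ m) :
    Nnum 1 m =
      (∑ j ∈ Finset.Icc 1 (m - 1), (2 ^ j - 1) * Nnum 1 (m - j)) +
        (2 ^ m - 1) + (2 ^ (m + 1) - 1) := by
  obtain ⟨k, rfl⟩ : ∃ k, m = k + 1 := ⟨m - 1, by omega⟩
  rw [show k + 1 - 1 = k from rfl, sum_Icc_one]
  -- reflect
  have hrefl : (∑ j ∈ range k, (2 ^ (j + 1) - 1) * Nnum 1 (k + 1 - (j + 1)))
      = ∑ i ∈ range k, (2 ^ (k - i) - 1) * Nnum 1 (i + 1) := by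
    rw [← Finset.sum_range_reflect (fun j => (2 ^ (j + 1) - 1) * Nnum 1 (k + 1 - (j + 1))) k]
    apply Finset.sum_congr rfl
    intro i hi
    rw [Finset.mem_range] at hi
    rw [show k + 1 - (k - 1 - i + 1) = i + 1 by omega, show k - 1 - i + 1 = k - i by omega]
  rw [hrefl]
  -- subtraction-free sum
  have hAB : (∑ i ∈ range k, (2 ^ (k - i) - 1) * Nnum 1 (i + 1))
      + (∑ i ∈ range k, Nnum 1 (i + 1)) = ∑ i ∈ range k, 2 ^ (k - i) * Nnum 1 (i + 1) := by
    rw [← Finset.sum_add_distrib]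
    apply Finset.sum_congr rfl
    intro i hi
    have h1 : (1 : ℕ) ≤ 2 ^ (k - i) := Nat.one_le_two_pow
    have : (2 ^ (k - i) - 1) * Nnum 1 (i + 1) + 1 * Nnum 1 (i + 1)
        = (2 ^ (k - i) - 1 + 1) * Nnum 1 (i + 1) := by rw [add_mul]
    rw [one_mul] at this
    rw [this, Nat.sub_add_cancel h1]
  have hS := S_formula k
  rw [Finset.sum_range_succ] at hS
  have p1 : (2 : ℕ) ^ (k + 1) = 2 * 2 ^ k := by ring
  have p2 : (2 : ℕ) ^ (k + 1 + 1) = 4 * 2 ^ k := by ring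
  have p3 : (2 : ℕ) ^ (k + 3) = 8 * 2 ^ k := by ring
  have p4 : (1 : ℕ) ≤ 2 ^ k := Nat.one_le_two_pow
  omega
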